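/- Let Y = (Yβ, Yδ′)′ ∼ N((β, δ′)′, Ω) with Ω a positive definite (k+1)×(k+1) correlation matrix. Then Yβ − Ω_{βδ}Ω_{δδ}^{−1}Yδ is Gaussian with mean β − Ω_{βδ}Ω_{δδ}^{−1}δ and variance 1 − Ω_{βδ}Ω_{δδ}^{−1}Ω_{δβ}. Consequently, for α ∈ (0,1), if every entry of the row vector Ω_{βδ}Ω_{δδ}^{−1} is non-negative and δ ≥ 0 componentwise, then P(β ≥ Yβ − Ω_{βδ}Ω_{δδ}^{−1}Yδ − z_{1−α}√(1 − Ω_{βδ}Ω_{δδ}^{−1}Ω_{δβ})) ≥ 1−α, with equality when δ = 0. -/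

import Mathlib

open MeasureTheory ProbabilityTheory Real Matrix

/-- The standard normal distribution on `ℝ`. -/
noncomputable def stdNormal : Measure ℝ := gaussianReal 0 1

/-- The law of `Y = (Yβ, Yδ')' ~ N((β, δ')', Ω)`, realized as the image of a vector of `k + 1`
independent standard normals under the affine map `x ↦ mean + R x`, where `R Rᵀ = Ω`. -/
noncomputable def gaussLaw {k : ℕ} (R : Matrix (Fin (k + 1)) (Fin (k + 1)) ℝ)
    (β : ℝ) (δ : Fin k → ℝ) : Measure (Fin (k + 1) → ℝ) :=
  Measure.map (fun x (i : Fin (k + 1)) => Fin.cases β δ i + ∑ j, R i j * x j)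
    (Measure.pi fun _ : Fin (k + 1) => stdNormal)

/-- The coefficient vector `Ω_{δδ}⁻¹ Ω_{δβ}`; by symmetry of `Ω` its entries are those of the
row vector `Ω_{βδ} Ω_{δδ}⁻¹`.  Index `0` corresponds to `β` and index `j.succ` to `δ_j`. -/
noncomputable def coefFull {k : ℕ} (Ω : Matrix (Fin (k + 1)) (Fin (k + 1)) ℝ) :
    Fin k → ℝ :=
  (Matrix.of fun i j : Fin k => Ω i.succ j.succ)⁻¹.mulVec fun j : Fin k => Ω j.succ 0

/-- `Ω_{βδ} Ω_{δδ}⁻¹ Ω_{δβ}`. -/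
noncomputable def omegaFull {k : ℕ} (Ω : Matrix (Fin (k + 1)) (Fin (k + 1)) ℝ) : ℝ :=
  ∑ j : Fin k, coefFull Ω j * Ω 0 j.succ

open scoped NNReal ENNReal

instance : IsProbabilityMeasure stdNormal := by unfold stdNormal; infer_instance

lemma pdf_mul_pdf (m₁ m₂ : ℝ) (v₁ v₂ : ℝ≥0) (hv₁ : v₁ ≠ 0) (hv₂ : v₂ ≠ 0) (t x : ℝ) :
    gaussianPDFReal m₁ v₁ x * gaussianPDFReal m₂ v₂ (t - x) =
      gaussianPDFReal (m₁ + m₂) (v₁ + v₂) t *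
        gaussianPDFReal (((v₂ : ℝ) * m₁ + v₁ * (t - m₂)) / (v₁ + v₂)) (v₁ * v₂ / (v₁ + v₂)) x := by
  have h1 : (0:ℝ) < v₁ := by positivity
  have h2 : (0:ℝ) < v₂ := by positivity
  have h12 : (0:ℝ) < (v₁:ℝ) + v₂ := by positivity
  have hu : ((v₁ * v₂ / (v₁ + v₂) : ℝ≥0) : ℝ) = (v₁ : ℝ) * v₂ / (v₁ + v₂) := by
    push_cast [NNReal.coe_div]; ring
  unfold gaussianPDFReal
  rw [mul_mul_mul_comm, mul_mul_mul_comm ((√(2 * π * ((v₁ + v₂ : ℝ≥0) : ℝ)))⁻¹)]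
  push_cast [hu]
  congr 1
  · rw [← mul_inv, ← mul_inv, ← Real.sqrt_mul (by positivity), ← Real.sqrt_mul (by positivity)]
    congr 1
    field_simp
  · rw [← Real.exp_add, ← Real.exp_add]
    congr 1
    rw [div_add_div _ _ (by positivity) (by positivity), div_add_div _ _ (by positivity) (by positivity)]
    rw [div_eq_div_iff (by positivity) (by positivity)]
    field_simp
    ring

lemma gaussian_conv (m₁ m₂ : ℝ) (v₁ v₂ : ℝ≥0) :
    Measure.map (fun p : ℝ × ℝ => p.1 + p.2) ((gaussianReal m₁ v₁).prod (gaussianReal m₂ v₂)) =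
      gaussianReal (m₁ + m₂) (v₁ + v₂) := by
  by_cases hv₁ : v₁ = 0
  · subst hv₁
    rw [gaussianReal_zero_var, Measure.dirac_prod,
      Measure.map_map measurable_add measurable_prodMk_left]
    have h : (fun p : ℝ × ℝ => p.1 + p.2) ∘ (Prod.mk m₁) = (m₁ + ·) := rfl
    rw [h, gaussianReal_map_const_add, add_comm m₂ m₁, zero_add]
  by_cases hv₂ : v₂ = 0
  · subst hv₂
    rw [gaussianReal_zero_var, Measure.prod_dirac,
      Measure.map_map measurable_add measurable_prodMk_right]
    have h : (fun p : ℝ × ℝ => p.1 + p.2) ∘ (fun x => (x, m₂)) = (· + m₂) := rfl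
    rw [h, gaussianReal_map_add_const, add_zero]
  have hv₁₂ : v₁ + v₂ ≠ 0 := fun h => hv₁ (add_eq_zero.mp h).1
  have hu : v₁ * v₂ / (v₁ + v₂) ≠ 0 := by
    simp only [ne_eq, div_eq_zero_iff, mul_eq_zero, not_or]
    exact ⟨⟨hv₁, hv₂⟩, hv₁₂⟩
  set g₁ := gaussianPDF m₁ v₁
  set g₂ := gaussianPDF m₂ v₂
  ext s hs
  rw [Measure.map_apply measurable_add hs,
    gaussianReal_of_var_ne_zero m₁ hv₁, gaussianReal_of_var_ne_zero m₂ hv₂,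
    gaussianReal_of_var_ne_zero _ hv₁₂,
    Measure.prod_apply (measurable_add hs), withDensity_apply _ hs]
  have hslice : ∀ x : ℝ, (volume.withDensity g₂) (Prod.mk x ⁻¹' ((fun p : ℝ × ℝ => p.1 + p.2) ⁻¹' s))
      = ∫⁻ t in s, g₂ (t - x) := by
    intro x
    have hpre : (Prod.mk x ⁻¹' ((fun p : ℝ × ℝ => p.1 + p.2) ⁻¹' s)) = (fun y => x + y) ⁻¹' s := rfl
    rw [hpre, withDensity_apply _ ((measurable_const_add x) hs)]
    have hmapv : Measure.map (fun y : ℝ => x + y) volume = volume := map_add_left_eq_self volume x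
    conv_rhs => rw [← hmapv]
    rw [setLIntegral_map (f := fun t => g₂ (t - x)) hs
      ((measurable_gaussianPDF m₂ v₂).comp (measurable_id.sub_const x)) (measurable_const_add x)]
    simp
  rw [show gaussianPDF m₂ v₂ = g₂ from rfl, show gaussianPDF m₁ v₁ = g₁ from rfl]
  simp_rw [hslice]
  rw [lintegral_withDensity_eq_lintegral_mul volume (measurable_gaussianPDF m₁ v₁)
    (by exact Measurable.lintegral_prod_right ((measurable_gaussianPDF m₂ v₂).comp (measurable_snd.sub measurable_fst)))]
  have hpull : ∀ x : ℝ, g₁ x * ∫⁻ t in s, g₂ (t - x) = ∫⁻ t in s, g₁ x * g₂ (t - x) := fun x =>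
    (lintegral_const_mul _ ((measurable_gaussianPDF m₂ v₂).comp (measurable_id.sub_const x))).symm
  simp only [Pi.mul_apply]
  rw [show gaussianPDF m₁ v₁ = g₁ from rfl]
  simp_rw [hpull]
  rw [lintegral_lintegral_swap (((measurable_gaussianPDF m₁ v₁).comp measurable_fst).mul
    ((measurable_gaussianPDF m₂ v₂).comp (measurable_snd.sub measurable_fst))).aemeasurable]
  refine setLIntegral_congr_fun hs (fun t _ => ?_)
  have hpt : ∀ x, g₁ x * g₂ (t - x) =
      gaussianPDF (m₁ + m₂) (v₁ + v₂) t *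
        gaussianPDF (((v₂ : ℝ) * m₁ + v₁ * (t - m₂)) / (v₁ + v₂)) (v₁ * v₂ / (v₁ + v₂)) x := by
    intro x
    simp only [g₁, g₂, gaussianPDF]
    rw [← ENNReal.ofReal_mul (gaussianPDFReal_nonneg _ _ _),
      ← ENNReal.ofReal_mul (gaussianPDFReal_nonneg _ _ _),
      pdf_mul_pdf m₁ m₂ v₁ v₂ hv₁ hv₂ t x]
  simp_rw [hpt]
  rw [lintegral_const_mul _ (measurable_gaussianPDF _ _), lintegral_gaussianPDF_eq_one _ hu,
    mul_one]

lemma map_linear_pi : ∀ (n : ℕ) (a : Fin n → ℝ),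
    Measure.map (fun x : Fin n → ℝ => ∑ j, a j * x j) (Measure.pi fun _ => stdNormal)
      = gaussianReal 0 (∑ j, (a j)^2).toNNReal := by
  intro n
  induction n with
  | zero =>
    intro a
    have h : (fun x : Fin 0 → ℝ => ∑ j, a j * x j) = fun _ => (0:ℝ) := by
      funext x; simp
    rw [h, Measure.map_const]
    simp [Real.toNNReal_zero, gaussianReal_zero_var]
  | succ n ih =>
    intro a
    have hmp := measurePreserving_piFinSuccAbove (fun _ : Fin (n + 1) => stdNormal) 0
    have hpi : (Measure.pi fun _ : Fin (n + 1) => stdNormal) =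
        Measure.map (MeasurableEquiv.piFinSuccAbove (fun _ : Fin (n + 1) => ℝ) 0).symm
          (stdNormal.prod (Measure.pi fun _ : Fin n => stdNormal)) :=
      ((hmp.symm _).map_eq).symm
    have hfmeas : Measurable (fun x : Fin (n + 1) → ℝ => ∑ j, a j * x j) := by fun_prop
    rw [hpi, Measure.map_map hfmeas (MeasurableEquiv.measurable _)]
    have hcomp : (fun x : Fin (n + 1) → ℝ => ∑ j, a j * x j) ∘
        (MeasurableEquiv.piFinSuccAbove (fun _ : Fin (n + 1) => ℝ) 0).symm =
        (fun p : ℝ × (Fin n → ℝ) => (a 0 * p.1) + ∑ j, a j.succ * p.2 j) := by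
      funext p
      simp [MeasurableEquiv.piFinSuccAbove, Fin.sum_univ_succ]
    rw [hcomp]
    have hsplit : (fun p : ℝ × (Fin n → ℝ) => (a 0 * p.1) + ∑ j, a j.succ * p.2 j) =
        (fun q : ℝ × ℝ => q.1 + q.2) ∘
          (Prod.map (fun x : ℝ => a 0 * x) (fun y : Fin n → ℝ => ∑ j, a j.succ * y j)) := rfl
    rw [hsplit, ← Measure.map_map measurable_add (by fun_prop),
      ← Measure.map_prod_map _ _ (by fun_prop) (by fun_prop)]
    have h1 : Measure.map (fun x : ℝ => a 0 * x) stdNormal = gaussianReal 0 ((a 0)^2).toNNReal := by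
      unfold stdNormal
      rw [gaussianReal_map_const_mul]
      congr 1
      · ring
      · ext; simp [Real.toNNReal, max_eq_left (sq_nonneg (a 0))]
    rw [h1, ih, gaussian_conv]
    congr 1
    · ring
    · rw [Fin.sum_univ_succ (f := fun j => a j ^ 2),
        Real.toNNReal_add (sq_nonneg _) (Finset.sum_nonneg fun _ _ => sq_nonneg _)]

lemma map_affine_pi (n : ℕ) (m : ℝ) (a : Fin n → ℝ) :
    Measure.map (fun x : Fin n → ℝ => m + ∑ j, a j * x j) (Measure.pi fun _ => stdNormal)
      = gaussianReal m (∑ j, (a j)^2).toNNReal := by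
  have h : (fun x : Fin n → ℝ => m + ∑ j, a j * x j)
      = (fun t => m + t) ∘ (fun x => ∑ j, a j * x j) := rfl
  rw [h, ← Measure.map_map (by fun_prop) (by fun_prop), map_linear_pi,
    gaussianReal_map_const_add, zero_add]

lemma gauss_Iic (m t : ℝ) (v : ℝ≥0) (hv : v ≠ 0) :
    gaussianReal m v (Set.Iic t) = stdNormal (Set.Iic ((t - m) / Real.sqrt v)) := by
  have hv' : (0:ℝ) < v := lt_of_le_of_ne v.coe_nonneg (by simpa [eq_comm, NNReal.coe_eq_zero] using hv)
  have hσ : (0:ℝ) < Real.sqrt v := Real.sqrt_pos.mpr hv'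
  have h1 : Measure.map (fun x : ℝ => Real.sqrt v * x) stdNormal = gaussianReal 0 v := by
    unfold stdNormal
    rw [gaussianReal_map_const_mul]
    congr 1
    · ring
    · ext
      simp [Real.sq_sqrt v.coe_nonneg]
  have hrep : gaussianReal m v = Measure.map (fun x => Real.sqrt v * x + m) stdNormal := by
    have h2 : (fun x : ℝ => Real.sqrt v * x + m) = (· + m) ∘ (Real.sqrt v * ·) := rfl
    rw [h2, ← Measure.map_map (by fun_prop) (by fun_prop), h1, gaussianReal_map_add_const,
      zero_add]
  rw [hrep, Measure.map_apply (by fun_prop) measurableSet_Iic]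
  congr 1
  ext x
  simp only [Set.mem_preimage, Set.mem_Iic]
  rw [le_div_iff₀ hσ, mul_comm]
  constructor <;> intro h <;> linarith

section LinAlg
variable {k : ℕ} (Ω : Matrix (Fin (k + 1)) (Fin (k + 1)) ℝ)

lemma omega_symm (hpd : Ω.PosDef) (i j : Fin (k + 1)) : Ω i j = Ω j i := by
  have h := congrFun (congrFun hpd.1 i) j
  simpa [Matrix.conjTranspose_apply] using h.symm

lemma sub_posDef (hpd : Ω.PosDef) : (Matrix.of fun i j : Fin k => Ω i.succ j.succ).PosDef := by
  refine Matrix.PosDef.of_dotProduct_mulVec_pos ?_ ?_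
  · ext i j
    simp only [Matrix.conjTranspose_apply, Matrix.of_apply, star_trivial]
    exact omega_symm Ω hpd j.succ i.succ
  · intro x hx
    have hx' : (Fin.cases 0 x : Fin (k + 1) → ℝ) ≠ 0 := by
      intro h
      apply hx
      funext j
      have := congrFun h j.succ
      simpa using this
    have h := hpd.dotProduct_mulVec_pos hx'
    simp only [star_trivial] at h ⊢
    convert h using 1
    simp only [dotProduct, Matrix.mulVec, Fin.sum_univ_succ, Fin.cases_zero, Fin.cases_succ,
      zero_mul, mul_zero, zero_add, add_zero, Matrix.of_apply, dotProduct]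

lemma coef_eq (hpd : Ω.PosDef) (i : Fin k) :
    (∑ j, Ω i.succ j.succ * coefFull Ω j) = Ω i.succ 0 := by
  set M := Matrix.of fun i j : Fin k => Ω i.succ j.succ with hM
  have hu : IsUnit M.det := (sub_posDef Ω hpd).det_pos.ne'.isUnit
  have h : M *ᵥ coefFull Ω = fun j : Fin k => Ω j.succ 0 := by
    unfold coefFull
    rw [Matrix.mulVec_mulVec, Matrix.mul_nonsing_inv _ hu, Matrix.one_mulVec]
  have := congrFun h i
  simpa [Matrix.mulVec, dotProduct, hM] using this

end LinAlg

section Var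
variable {k : ℕ} {Ω : Matrix (Fin (k + 1)) (Fin (k + 1)) ℝ}

lemma quad_expand (R : Matrix (Fin (k + 1)) (Fin (k + 1)) ℝ) (hR : R * Rᵀ = Ω)
    (x : Fin (k + 1) → ℝ) :
    ∑ j, (∑ i, x i * R i j)^2 = ∑ i, ∑ i', x i * x i' * Ω i i' := by
  have hOentry : ∀ i i', Ω i i' = ∑ j, R i j * R i' j := by
    intro i i'
    have h := congrFun (congrFun hR i) i'
    simpa [Matrix.mul_apply, Matrix.transpose_apply] using h.symm
  calc ∑ j, (∑ i, x i * R i j)^2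
      = ∑ j, ∑ i, ∑ i', (x i * R i j) * (x i' * R i' j) := by
        simp_rw [sq, Finset.sum_mul_sum]
    _ = ∑ i, ∑ i', ∑ j, (x i * R i j) * (x i' * R i' j) := by
        rw [Finset.sum_comm]
        exact Finset.sum_congr rfl fun i _ => Finset.sum_comm
    _ = ∑ i, ∑ i', x i * x i' * Ω i i' := by
        refine Finset.sum_congr rfl fun i _ => Finset.sum_congr rfl fun i' _ => ?_
        rw [hOentry, Finset.mul_sum]
        exact Finset.sum_congr rfl fun j _ => by ring

lemma vOv_eq (hpd : Ω.PosDef) (hdiag : Ω 0 0 = 1) :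
    ∑ i, ∑ i', (Fin.cases 1 (fun i => -(coefFull Ω i)) : Fin (k + 1) → ℝ) i *
        (Fin.cases 1 (fun i => -(coefFull Ω i)) : Fin (k + 1) → ℝ) i' * Ω i i'
      = 1 - omegaFull Ω := by
  set c := coefFull Ω with hc
  have e1 : ∑ i' : Fin k, (1:ℝ) * (-(c i')) * Ω 0 i'.succ = -omegaFull Ω := by
    unfold omegaFull
    rw [← Finset.sum_neg_distrib]
    exact Finset.sum_congr rfl fun i _ => by ring
  have e2 : ∑ i : Fin k, (-(c i)) * (1:ℝ) * Ω i.succ 0 = -omegaFull Ω := by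
    unfold omegaFull
    rw [← Finset.sum_neg_distrib]
    exact Finset.sum_congr rfl fun i _ => by rw [omega_symm Ω hpd i.succ 0]; ring
  have e3 : ∑ i : Fin k, ∑ i' : Fin k, (-(c i)) * (-(c i')) * Ω i.succ i'.succ
      = omegaFull Ω := by
    have hrow : ∀ i : Fin k, ∑ i' : Fin k, (-(c i)) * (-(c i')) * Ω i.succ i'.succ
        = c i * Ω i.succ 0 := by
      intro i
      rw [← coef_eq Ω hpd i, Finset.mul_sum]
      exact Finset.sum_congr rfl fun i' _ => by ring
    simp_rw [hrow]
    unfold omegaFull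
    exact Finset.sum_congr rfl fun i _ => by rw [omega_symm Ω hpd i.succ 0]
  rw [Fin.sum_univ_succ]
  simp only [Fin.cases_zero, Fin.cases_succ]
  rw [Fin.sum_univ_succ (f := fun i' => (1:ℝ) * (Fin.cases 1 (fun i => -(c i)) : Fin (k+1) → ℝ) i' * Ω 0 i')]
  simp only [Fin.cases_zero, Fin.cases_succ]
  have e4 : ∀ i : Fin k, (∑ i' : Fin (k+1), (-(c i)) * (Fin.cases 1 (fun i => -(c i)) : Fin (k+1) → ℝ) i' * Ω i.succ i')
      = (-(c i)) * 1 * Ω i.succ 0 + ∑ i' : Fin k, (-(c i)) * (-(c i')) * Ω i.succ i'.succ := by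
    intro i
    rw [Fin.sum_univ_succ]
    simp only [Fin.cases_zero, Fin.cases_succ]
  simp_rw [e4]
  rw [Finset.sum_add_distrib, e1, e2, e3, hdiag]
  ring

end Var

lemma one_sub_omega_pos {k : ℕ} {Ω : Matrix (Fin (k + 1)) (Fin (k + 1)) ℝ}
    (hpd : Ω.PosDef) (hdiag : Ω 0 0 = 1) : 0 < 1 - omegaFull Ω := by
  have hv0 : (Fin.cases 1 (fun i => -(coefFull Ω i)) : Fin (k + 1) → ℝ) ≠ 0 := by
    intro h
    have := congrFun h 0
    simp at this
  have h := hpd.dotProduct_mulVec_pos hv0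
  simp only [star_trivial] at h
  rw [show dotProduct (Fin.cases 1 (fun i => -(coefFull Ω i)) : Fin (k + 1) → ℝ)
      (Ω *ᵥ (Fin.cases 1 (fun i => -(coefFull Ω i)) : Fin (k + 1) → ℝ))
      = ∑ i, ∑ i', (Fin.cases 1 (fun i => -(coefFull Ω i)) : Fin (k + 1) → ℝ) i *
        (Fin.cases 1 (fun i => -(coefFull Ω i)) : Fin (k + 1) → ℝ) i' * Ω i i' from by
    simp only [dotProduct, Matrix.mulVec, dotProduct, Finset.mul_sum]
    exact Finset.sum_congr rfl fun i _ => Finset.sum_congr rfl fun i' _ => by ring] at h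
  rwa [vOv_eq hpd hdiag] at h

/-- `Yβ - Ω_{βδ} Ω_{δδ}⁻¹ Yδ` is Gaussian with mean `β - Ω_{βδ} Ω_{δδ}⁻¹ δ` and
variance `1 - Ω_{βδ} Ω_{δδ}⁻¹ Ω_{δβ}`; consequently, if `Ω_{βδ} Ω_{δδ}⁻¹ ≥ 0` and `δ ≥ 0`,
then `P(β ≥ Yβ - Ω_{βδ} Ω_{δδ}⁻¹ Yδ - z_{1-α} √(1 - Ω_{βδ} Ω_{δδ}⁻¹ Ω_{δβ})) ≥ 1 - α`,
with equality when `δ = 0`. -/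
theorem stmt18 (k : ℕ) (α : ℝ) (hα : α ∈ Set.Ioo (0 : ℝ) 1)
    (Ω : Matrix (Fin (k + 1)) (Fin (k + 1)) ℝ) (hpd : Ω.PosDef) (hdiag : ∀ i, Ω i i = 1)
    (R : Matrix (Fin (k + 1)) (Fin (k + 1)) ℝ) (hR : R * Rᵀ = Ω)
    (zα : ℝ) (hzα : stdNormal (Set.Iic zα) = ENNReal.ofReal (1 - α))
    (β : ℝ) (δ : Fin k → ℝ) :
    Measure.map (fun y : Fin (k + 1) → ℝ => y 0 - ∑ j : Fin k, coefFull Ω j * y j.succ)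
        (gaussLaw R β δ) =
      gaussianReal (β - ∑ j : Fin k, coefFull Ω j * δ j) (1 - omegaFull Ω).toNNReal ∧
    ((∀ j, 0 ≤ coefFull Ω j) → (∀ i, 0 ≤ δ i) →
      ENNReal.ofReal (1 - α) ≤
        gaussLaw R β δ {y : Fin (k + 1) → ℝ |
          y 0 - (∑ j : Fin k, coefFull Ω j * y j.succ) -
            zα * Real.sqrt (1 - omegaFull Ω) ≤ β}) ∧
    ((∀ j, 0 ≤ coefFull Ω j) →
      gaussLaw R β 0 {y : Fin (k + 1) → ℝ |
          y 0 - (∑ j : Fin k, coefFull Ω j * y j.succ) -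
            zα * Real.sqrt (1 - omegaFull Ω) ≤ β} = ENNReal.ofReal (1 - α)) := by
  have hσpos : 0 < 1 - omegaFull Ω := one_sub_omega_pos hpd (hdiag 0)
  set c : Fin k → ℝ := coefFull Ω with hc
  set a : Fin (k + 1) → ℝ := fun j => R 0 j - ∑ i, c i * R i.succ j with ha
  have hf : Measurable (fun y : Fin (k + 1) → ℝ => y 0 - ∑ j : Fin k, c j * y j.succ) := by
    fun_prop
  -- part 1, for arbitrary δ
  have part1 : ∀ δ' : Fin k → ℝ,
      Measure.map (fun y : Fin (k + 1) → ℝ => y 0 - ∑ j : Fin k, c j * y j.succ)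
        (gaussLaw R β δ') =
      gaussianReal (β - ∑ j : Fin k, c j * δ' j) (1 - omegaFull Ω).toNNReal := by
    intro δ'
    unfold gaussLaw
    rw [Measure.map_map hf (by fun_prop)]
    have hcomp : (fun y : Fin (k + 1) → ℝ => y 0 - ∑ j : Fin k, c j * y j.succ) ∘
        (fun x (i : Fin (k + 1)) => Fin.cases β δ' i + ∑ j, R i j * x j) =
        fun x : Fin (k + 1) → ℝ => (β - ∑ j : Fin k, c j * δ' j) + ∑ j, a j * x j := by
      funext x
      simp only [Function.comp_apply, Fin.cases_zero, Fin.cases_succ, ha]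
      have hswap : ∑ i : Fin k, c i * ∑ j, R i.succ j * x j
          = ∑ j, (∑ i : Fin k, c i * R i.succ j) * x j := by
        simp_rw [Finset.mul_sum, Finset.sum_mul]
        rw [Finset.sum_comm]
        exact Finset.sum_congr rfl fun j _ => Finset.sum_congr rfl fun i _ => by ring
      simp only [mul_add, Finset.sum_add_distrib, hswap, sub_mul, Finset.sum_sub_distrib]
      ring
    rw [hcomp, map_affine_pi]
    congr 1
    have hvar : ∑ j, (a j)^2 = 1 - omegaFull Ω := by
      have hav : ∀ j, a j = ∑ i, (Fin.cases 1 (fun i => -(c i)) : Fin (k + 1) → ℝ) i * R i j := by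
        intro j
        rw [Fin.sum_univ_succ]
        simp only [Fin.cases_zero, Fin.cases_succ, one_mul, neg_mul, ha]
        rw [sub_eq_add_neg, ← Finset.sum_neg_distrib]
      simp_rw [hav]
      rw [quad_expand R hR, vOv_eq hpd (hdiag 0)]
    rw [hvar]
  have hVne : (1 - omegaFull Ω).toNNReal ≠ 0 := by
    simp only [ne_eq, Real.toNNReal_eq_zero, not_le]
    exact hσpos
  have hVcoe : ((1 - omegaFull Ω).toNNReal : ℝ) = 1 - omegaFull Ω :=
    Real.coe_toNNReal _ hσpos.le
  have hσ' : 0 < Real.sqrt (1 - omegaFull Ω) := Real.sqrt_pos.mpr hσpos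
  have hsetP : ∀ δ' : Fin k → ℝ,
      gaussLaw R β δ' {y : Fin (k + 1) → ℝ |
          y 0 - (∑ j : Fin k, c j * y j.succ) - zα * Real.sqrt (1 - omegaFull Ω) ≤ β}
        = stdNormal (Set.Iic (((β + zα * Real.sqrt (1 - omegaFull Ω)) -
            (β - ∑ j : Fin k, c j * δ' j)) / Real.sqrt (1 - omegaFull Ω))) := by
    intro δ'
    have hset : {y : Fin (k + 1) → ℝ |
          y 0 - (∑ j : Fin k, c j * y j.succ) - zα * Real.sqrt (1 - omegaFull Ω) ≤ β}
        = (fun y : Fin (k + 1) → ℝ => y 0 - ∑ j : Fin k, c j * y j.succ) ⁻¹'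
          (Set.Iic (β + zα * Real.sqrt (1 - omegaFull Ω))) := by
      ext y
      simp only [Set.mem_setOf_eq, Set.mem_preimage, Set.mem_Iic]
      constructor <;> intro h <;> linarith
    rw [hset, ← Measure.map_apply hf measurableSet_Iic, part1 δ', gauss_Iic _ _ _ hVne]
    congr 2
    rw [hVcoe]
  refine ⟨part1 δ, ?_, ?_⟩
  · -- part 2
    intro hcnn hδnn
    have hd : 0 ≤ ∑ j : Fin k, c j * δ j :=
      Finset.sum_nonneg fun j _ => mul_nonneg (hcnn j) (hδnn j)
    rw [hsetP δ, ← hzα]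
    refine measure_mono (Set.Iic_subset_Iic.mpr ?_)
    rw [le_div_iff₀ hσ']
    nlinarith [hσ'.le]
  · -- part 3
    intro hcnn
    rw [hsetP 0]
    have h0 : ((β + zα * Real.sqrt (1 - omegaFull Ω)) -
        (β - ∑ j : Fin k, c j * (0 : Fin k → ℝ) j)) / Real.sqrt (1 - omegaFull Ω) = zα := by
      simp only [Pi.zero_apply, mul_zero, Finset.sum_const_zero, sub_zero]
      field_simp
      ring
    rw [h0, hzα]
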